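/- Let A, B, X, Y, A', B', X', Y' be finitely-valued random variables on a common probability space and let t ≥ 0 be a real number. Suppose each of the ten joint entropies H[X,Y], H[A,X], H[A,Y], H[B,X], H[B,Y], H[X',Y'], H[A',X'], H[A',Y'], H[B',X'], H[B',Y'] is at most 3t. Then the minimum of the fifteen joint entropies H[A,B], H[A,X,Y], H[B,X,Y], H[A',B'], H[A',X',Y'], H[B',X',Y'], H[A',A], H[X',A], H[Y',A], H[A',X], H[X',X], H[Y',X], H[A',Y], H[X',Y], H[Y',Y] is at most (66/17)·t (in particular strictly less than 4t when t > 0). -/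

import Mathlib

noncomputable def entropy {Ω α : Type*} [Fintype Ω] (p : Ω → ℝ) (f : Ω → α) : ℝ :=
  letI := Classical.decEq α
  ∑ y ∈ Finset.univ.image f,
    -((∑ ω ∈ Finset.univ.filter (fun ω => f ω = y), p ω) *
        Real.logb 2 (∑ ω ∈ Finset.univ.filter (fun ω => f ω = y), p ω))

namespace EB2
open Finset Real

variable {α β γ δ : Type*} [Fintype α] [Fintype β] [Fintype γ] [Fintype δ]

lemma submod_core (m : α → β → γ → ℝ) (h0 : ∀ a b c, 0 ≤ m a b c)
    (h1 : ∑ a, ∑ b, ∑ c, m a b c = 1) :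
    (∑ c, -((∑ a, ∑ b, m a b c) * Real.logb 2 (∑ a, ∑ b, m a b c)))
      + ∑ a, ∑ b, ∑ c, -(m a b c * Real.logb 2 (m a b c)) ≤
    (∑ a, ∑ c, -((∑ b, m a b c) * Real.logb 2 (∑ b, m a b c)))
      + ∑ b, ∑ c, -((∑ a, m a b c) * Real.logb 2 (∑ a, m a b c)) := by
  set L2 : ℝ := Real.log 2 with hL2def
  have hL2 : 0 < L2 := Real.log_pos one_lt_two
  set M1 : α → γ → ℝ := fun a c => ∑ b, m a b c with hM1
  set M2 : β → γ → ℝ := fun b c => ∑ a, m a b c with hM2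
  set M3 : γ → ℝ := fun c => ∑ a, ∑ b, m a b c with hM3
  have hM1n : ∀ a c, 0 ≤ M1 a c := fun a c => Finset.sum_nonneg fun b _ => h0 a b c
  have hM2n : ∀ b c, 0 ≤ M2 b c := fun b c => Finset.sum_nonneg fun a _ => h0 a b c
  have hM3n : ∀ c, 0 ≤ M3 c := fun c =>
    Finset.sum_nonneg fun a _ => Finset.sum_nonneg fun b _ => h0 a b c
  have hM1ge : ∀ a b c, m a b c ≤ M1 a c := fun a b c =>
    Finset.single_le_sum (fun b' _ => h0 a b' c) (Finset.mem_univ b)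
  have hM2ge : ∀ a b c, m a b c ≤ M2 b c := fun a b c =>
    Finset.single_le_sum (fun a' _ => h0 a' b c) (Finset.mem_univ a)
  have hM3ge : ∀ a b c, m a b c ≤ M3 c := fun a b c =>
    le_trans (hM1ge a b c) (Finset.single_le_sum (fun a' _ => hM1n a' c) (Finset.mem_univ a))
  have hM3a : ∀ c, ∑ a, M1 a c = M3 c := fun c => rfl
  have hM3b : ∀ c, ∑ b, M2 b c = M3 c := fun c => Finset.sum_comm
  -- rewrite the three coarse entropy sums as triple sums
  have A1 : (∑ a, ∑ c, -(M1 a c * Real.logb 2 (M1 a c)))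
      = ∑ a, ∑ b, ∑ c, -(m a b c * Real.logb 2 (M1 a c)) := by
    have step : ∀ a c, -(M1 a c * Real.logb 2 (M1 a c))
        = ∑ b, -(m a b c * Real.logb 2 (M1 a c)) := by
      intro a c
      rw [Finset.sum_neg_distrib, ← Finset.sum_mul]
    calc (∑ a, ∑ c, -(M1 a c * Real.logb 2 (M1 a c)))
        = ∑ a, ∑ c, ∑ b, -(m a b c * Real.logb 2 (M1 a c)) :=
          Finset.sum_congr rfl fun a _ => Finset.sum_congr rfl fun c _ => step a c
      _ = ∑ a, ∑ b, ∑ c, -(m a b c * Real.logb 2 (M1 a c)) :=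
          Finset.sum_congr rfl fun a _ => Finset.sum_comm
  have A2 : (∑ b, ∑ c, -(M2 b c * Real.logb 2 (M2 b c)))
      = ∑ a, ∑ b, ∑ c, -(m a b c * Real.logb 2 (M2 b c)) := by
    have step : ∀ b c, -(M2 b c * Real.logb 2 (M2 b c))
        = ∑ a, -(m a b c * Real.logb 2 (M2 b c)) := by
      intro b c
      rw [Finset.sum_neg_distrib, ← Finset.sum_mul]
    calc (∑ b, ∑ c, -(M2 b c * Real.logb 2 (M2 b c)))
        = ∑ b, ∑ c, ∑ a, -(m a b c * Real.logb 2 (M2 b c)) :=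
          Finset.sum_congr rfl fun b _ => Finset.sum_congr rfl fun c _ => step b c
      _ = ∑ b, ∑ a, ∑ c, -(m a b c * Real.logb 2 (M2 b c)) :=
          Finset.sum_congr rfl fun b _ => Finset.sum_comm
      _ = ∑ a, ∑ b, ∑ c, -(m a b c * Real.logb 2 (M2 b c)) := Finset.sum_comm
  have A3 : (∑ c, -(M3 c * Real.logb 2 (M3 c)))
      = ∑ a, ∑ b, ∑ c, -(m a b c * Real.logb 2 (M3 c)) := by
    have step1 : ∀ c, -(M3 c * Real.logb 2 (M3 c))
        = ∑ a, -(M1 a c * Real.logb 2 (M3 c)) := by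
      intro c
      rw [Finset.sum_neg_distrib, ← Finset.sum_mul, hM3a]
    have step2 : ∀ a c, -(M1 a c * Real.logb 2 (M3 c))
        = ∑ b, -(m a b c * Real.logb 2 (M3 c)) := by
      intro a c
      rw [Finset.sum_neg_distrib, ← Finset.sum_mul]
    calc (∑ c, -(M3 c * Real.logb 2 (M3 c)))
        = ∑ c, ∑ a, ∑ b, -(m a b c * Real.logb 2 (M3 c)) :=
          Finset.sum_congr rfl fun c _ => by
            rw [step1 c]
            exact Finset.sum_congr rfl fun a _ => step2 a c
      _ = ∑ a, ∑ c, ∑ b, -(m a b c * Real.logb 2 (M3 c)) := Finset.sum_comm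
      _ = ∑ a, ∑ b, ∑ c, -(m a b c * Real.logb 2 (M3 c)) :=
          Finset.sum_congr rfl fun a _ => Finset.sum_comm
  -- pointwise bound (multiplied through by log 2)
  have hpt : ∀ a b c,
      (m a b c * Real.logb 2 (M1 a c) + m a b c * Real.logb 2 (M2 b c)
        - m a b c * Real.logb 2 (M3 c) - m a b c * Real.logb 2 (m a b c)) * L2
      ≤ (if 0 < M3 c then M1 a c * M2 b c / M3 c else 0) - m a b c := by
    intro a b c
    rcases eq_or_lt_of_le (h0 a b c) with hz | hpos
    · rw [← hz]
      have e : ((0:ℝ) * Real.logb 2 (M1 a c) + 0 * Real.logb 2 (M2 b c)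
          - 0 * Real.logb 2 (M3 c) - 0 * Real.logb 2 0) * L2 = 0 := by ring
      rw [e, sub_zero]
      split_ifs with hcc
      · exact div_nonneg (mul_nonneg (hM1n a c) (hM2n b c)) (le_of_lt hcc)
      · exact le_refl 0

    · have h1p : 0 < M1 a c := lt_of_lt_of_le hpos (hM1ge a b c)
      have h2p : 0 < M2 b c := lt_of_lt_of_le hpos (hM2ge a b c)
      have h3p : 0 < M3 c := lt_of_lt_of_le hpos (hM3ge a b c)
      rw [if_pos h3p]
      have hx : (0:ℝ) < M1 a c * M2 b c / (M3 c * m a b c) := by positivity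
      have hlog := Real.log_le_sub_one_of_pos hx
      have hsplit : Real.log (M1 a c * M2 b c / (M3 c * m a b c))
          = Real.log (M1 a c) + Real.log (M2 b c) - Real.log (M3 c) - Real.log (m a b c) := by
        rw [Real.log_div (by positivity) (by positivity),
            Real.log_mul (ne_of_gt h1p) (ne_of_gt h2p),
            Real.log_mul (ne_of_gt h3p) (ne_of_gt hpos)]
        ring
      have hmul := mul_le_mul_of_nonneg_left hlog hpos.le
      have hfs : m a b c * (M1 a c * M2 b c / (M3 c * m a b c) - 1)
          = M1 a c * M2 b c / M3 c - m a b c := by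
        field_simp
      have hexp : (m a b c * Real.logb 2 (M1 a c) + m a b c * Real.logb 2 (M2 b c)
          - m a b c * Real.logb 2 (M3 c) - m a b c * Real.logb 2 (m a b c)) * L2
          = m a b c * (Real.log (M1 a c) + Real.log (M2 b c)
            - Real.log (M3 c) - Real.log (m a b c)) := by
        simp only [Real.logb, hL2def]
        field_simp
      rw [hexp, ← hsplit]
      linarith [hmul, hfs]
  -- summed bound
  have hIf : ∑ a, ∑ b, ∑ c, (if 0 < M3 c then M1 a c * M2 b c / M3 c else 0) ≤ 1 := by
    have step1 : (∑ a, ∑ b, ∑ c, (if 0 < M3 c then M1 a c * M2 b c / M3 c else 0))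
        = ∑ c, ∑ a, ∑ b, (if 0 < M3 c then M1 a c * M2 b c / M3 c else 0) := by
      rw [show (∑ a, ∑ b, ∑ c, (if 0 < M3 c then M1 a c * M2 b c / M3 c else 0))
          = ∑ a, ∑ c, ∑ b, (if 0 < M3 c then M1 a c * M2 b c / M3 c else 0) from
        Finset.sum_congr rfl fun a _ => Finset.sum_comm]
      exact Finset.sum_comm
    rw [step1]
    have hinner : ∀ c, (∑ a, ∑ b, (if 0 < M3 c then M1 a c * M2 b c / M3 c else 0)) ≤ M3 c := by
      intro c
      by_cases hc : 0 < M3 c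
      · simp only [if_pos hc]
        have : (∑ a, ∑ b, M1 a c * M2 b c / M3 c) = (∑ a, M1 a c) * (∑ b, M2 b c) / M3 c := by
          rw [Finset.sum_mul_sum]
          rw [Finset.sum_div]
          refine Finset.sum_congr rfl fun a _ => ?_
          rw [Finset.sum_div]
        rw [this, hM3a, hM3b]
        rw [mul_div_assoc, div_self (ne_of_gt hc), mul_one]
      · simp only [if_neg hc]
        simpa using hM3n c
    calc (∑ c, ∑ a, ∑ b, (if 0 < M3 c then M1 a c * M2 b c / M3 c else 0))
        ≤ ∑ c, M3 c := Finset.sum_le_sum fun c _ => hinner c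
      _ = 1 := by
          rw [show (∑ c, M3 c) = ∑ a, ∑ b, ∑ c, m a b c from ?_]
          · exact h1
          · rw [show (∑ a, ∑ b, ∑ c, m a b c) = ∑ a, ∑ c, ∑ b, m a b c from
              Finset.sum_congr rfl fun a _ => Finset.sum_comm]
            exact (Finset.sum_comm).symm
  have key : (∑ a, ∑ b, ∑ c, (m a b c * Real.logb 2 (M1 a c) + m a b c * Real.logb 2 (M2 b c)
      - m a b c * Real.logb 2 (M3 c) - m a b c * Real.logb 2 (m a b c))) ≤ 0 := by
    have hs : (∑ a, ∑ b, ∑ c, (m a b c * Real.logb 2 (M1 a c) + m a b c * Real.logb 2 (M2 b c)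
        - m a b c * Real.logb 2 (M3 c) - m a b c * Real.logb 2 (m a b c))) * L2
        = ∑ a, ∑ b, ∑ c, ((m a b c * Real.logb 2 (M1 a c) + m a b c * Real.logb 2 (M2 b c)
        - m a b c * Real.logb 2 (M3 c) - m a b c * Real.logb 2 (m a b c)) * L2) := by
      rw [Finset.sum_mul]
      refine Finset.sum_congr rfl fun a _ => ?_
      rw [Finset.sum_mul]
      refine Finset.sum_congr rfl fun b _ => ?_
      rw [Finset.sum_mul]
    have hb : (∑ a, ∑ b, ∑ c, ((m a b c * Real.logb 2 (M1 a c) + m a b c * Real.logb 2 (M2 b c)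
        - m a b c * Real.logb 2 (M3 c) - m a b c * Real.logb 2 (m a b c)) * L2))
        ≤ ∑ a, ∑ b, ∑ c, ((if 0 < M3 c then M1 a c * M2 b c / M3 c else 0) - m a b c) := by
      refine Finset.sum_le_sum fun a _ => Finset.sum_le_sum fun b _ =>
        Finset.sum_le_sum fun c _ => hpt a b c
    have hsub : (∑ a, ∑ b, ∑ c, ((if 0 < M3 c then M1 a c * M2 b c / M3 c else 0) - m a b c))
        = (∑ a, ∑ b, ∑ c, (if 0 < M3 c then M1 a c * M2 b c / M3 c else 0))
          - ∑ a, ∑ b, ∑ c, m a b c := by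
      simp [Finset.sum_sub_distrib]
    have : (∑ a, ∑ b, ∑ c, (m a b c * Real.logb 2 (M1 a c) + m a b c * Real.logb 2 (M2 b c)
        - m a b c * Real.logb 2 (M3 c) - m a b c * Real.logb 2 (m a b c))) * L2 ≤ 0 := by
      rw [hs]
      calc _ ≤ _ := hb
        _ ≤ (0:ℝ) := by rw [hsub, h1]; linarith [hIf]
    nlinarith [this, hL2]
  -- final assembly
  rw [A1, A2, A3] at *
  have hsplit4 : (∑ a, ∑ b, ∑ c, (m a b c * Real.logb 2 (M1 a c) + m a b c * Real.logb 2 (M2 b c)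
      - m a b c * Real.logb 2 (M3 c) - m a b c * Real.logb 2 (m a b c)))
      = (∑ a, ∑ b, ∑ c, m a b c * Real.logb 2 (M1 a c))
        + (∑ a, ∑ b, ∑ c, m a b c * Real.logb 2 (M2 b c))
        - (∑ a, ∑ b, ∑ c, m a b c * Real.logb 2 (M3 c))
        - (∑ a, ∑ b, ∑ c, m a b c * Real.logb 2 (m a b c)) := by
    simp [Finset.sum_add_distrib, Finset.sum_sub_distrib]
  rw [hsplit4] at key
  have e1 : (∑ a, ∑ b, ∑ c, -(m a b c * Real.logb 2 (M1 a c)))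
      = -(∑ a, ∑ b, ∑ c, m a b c * Real.logb 2 (M1 a c)) := by simp
  have e2 : (∑ a, ∑ b, ∑ c, -(m a b c * Real.logb 2 (M2 b c)))
      = -(∑ a, ∑ b, ∑ c, m a b c * Real.logb 2 (M2 b c)) := by simp
  have e3 : (∑ a, ∑ b, ∑ c, -(m a b c * Real.logb 2 (M3 c)))
      = -(∑ a, ∑ b, ∑ c, m a b c * Real.logb 2 (M3 c)) := by simp
  have e4 : (∑ a, ∑ b, ∑ c, -(m a b c * Real.logb 2 (m a b c)))
      = -(∑ a, ∑ b, ∑ c, m a b c * Real.logb 2 (m a b c)) := by simp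
  rw [e1, e2, e3, e4]
  linarith [key]

lemma ci_core (p4 : α → β → γ → δ → ℝ) (p3 : α → γ → δ → ℝ) (p2 : γ → δ → ℝ)
    (h4n : ∀ a b x y, 0 ≤ p4 a b x y)
    (marg1 : ∀ a x y, ∑ b, p4 a b x y = p3 a x y)
    (marg2 : ∀ x y, ∑ a, p3 a x y = p2 x y) :
    ∑ a, ∑ b, ∑ x, ∑ y, ∑ r,
      -((p4 a b x y * (p3 r x y / p2 x y)) *
        Real.logb 2 (p4 a b x y * (p3 r x y / p2 x y)))
    = (∑ a, ∑ b, ∑ x, ∑ y, -(p4 a b x y * Real.logb 2 (p4 a b x y)))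
      + (∑ r, ∑ x, ∑ y, -(p3 r x y * Real.logb 2 (p3 r x y)))
      - ∑ x, ∑ y, -(p2 x y * Real.logb 2 (p2 x y)) := by
  have h3n : ∀ a x y, 0 ≤ p3 a x y := fun a x y => by
    rw [← marg1]; exact Finset.sum_nonneg fun b _ => h4n a b x y
  have h2n : ∀ x y, 0 ≤ p2 x y := fun x y => by
    rw [← marg2]; exact Finset.sum_nonneg fun a _ => h3n a x y
  have h43 : ∀ a b x y, p4 a b x y ≤ p3 a x y := fun a b x y => by
    rw [← marg1]; exact Finset.single_le_sum (fun b' _ => h4n a b' x y) (Finset.mem_univ b)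
  have h32 : ∀ a x y, p3 a x y ≤ p2 x y := fun a x y => by
    rw [← marg2]; exact Finset.single_le_sum (fun a' _ => h3n a' x y) (Finset.mem_univ a)
  -- reorder LHS to x,y outermost
  have reorder : ∀ (T : α → β → γ → δ → ℝ),
      (∑ a, ∑ b, ∑ x, ∑ y, T a b x y) = ∑ x, ∑ y, ∑ a, ∑ b, T a b x y := by
    intro T
    calc (∑ a, ∑ b, ∑ x, ∑ y, T a b x y)
        = ∑ a, ∑ x, ∑ b, ∑ y, T a b x y :=
          Finset.sum_congr rfl fun a _ => Finset.sum_comm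
      _ = ∑ a, ∑ x, ∑ y, ∑ b, T a b x y :=
          Finset.sum_congr rfl fun a _ => Finset.sum_congr rfl fun x _ => Finset.sum_comm
      _ = ∑ x, ∑ a, ∑ y, ∑ b, T a b x y := Finset.sum_comm
      _ = ∑ x, ∑ y, ∑ a, ∑ b, T a b x y :=
          Finset.sum_congr rfl fun x _ => Finset.sum_comm
  rw [reorder (fun a b x y => ∑ r, -((p4 a b x y * (p3 r x y / p2 x y)) *
        Real.logb 2 (p4 a b x y * (p3 r x y / p2 x y)))),
     reorder (fun a b x y => -(p4 a b x y * Real.logb 2 (p4 a b x y)))]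
  have reorder3 : (∑ r, ∑ x, ∑ y, -(p3 r x y * Real.logb 2 (p3 r x y)))
      = ∑ x, ∑ y, ∑ r, -(p3 r x y * Real.logb 2 (p3 r x y)) := by
    calc (∑ r, ∑ x, ∑ y, -(p3 r x y * Real.logb 2 (p3 r x y)))
        = ∑ x, ∑ r, ∑ y, -(p3 r x y * Real.logb 2 (p3 r x y)) := Finset.sum_comm
      _ = ∑ x, ∑ y, ∑ r, -(p3 r x y * Real.logb 2 (p3 r x y)) :=
          Finset.sum_congr rfl fun x _ => Finset.sum_comm
  rw [reorder3]
  have keyxy : ∀ x y,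
      (∑ a, ∑ b, ∑ r, -((p4 a b x y * (p3 r x y / p2 x y)) *
          Real.logb 2 (p4 a b x y * (p3 r x y / p2 x y))))
      = (∑ a, ∑ b, -(p4 a b x y * Real.logb 2 (p4 a b x y)))
        + (∑ r, -(p3 r x y * Real.logb 2 (p3 r x y)))
        - -(p2 x y * Real.logb 2 (p2 x y)) := by
    intro x y
    by_cases h2 : p2 x y = 0
    · have h3z : ∀ r, p3 r x y = 0 := fun r =>
        le_antisymm (h2 ▸ h32 r x y) (h3n r x y)
      have h4z : ∀ a b, p4 a b x y = 0 := fun a b =>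
        le_antisymm (le_trans (h43 a b x y) (le_of_eq (h3z a))) (h4n a b x y)
      simp [h4z, h3z, h2]
    · have h2p : 0 < p2 x y := lt_of_le_of_ne (h2n x y) (Ne.symm h2)
      have hr1 : (∑ r, p3 r x y / p2 x y) = 1 := by
        rw [← Finset.sum_div, marg2, div_self h2]
      have hab : (∑ a, ∑ b, p4 a b x y) = p2 x y := by
        rw [Finset.sum_congr rfl fun a _ => marg1 a x y, marg2]
      have hpt : ∀ a b r,
          -((p4 a b x y * (p3 r x y / p2 x y)) *
              Real.logb 2 (p4 a b x y * (p3 r x y / p2 x y)))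
          = -((p4 a b x y * (p3 r x y / p2 x y)) * Real.logb 2 (p4 a b x y))
            - (p4 a b x y * (p3 r x y / p2 x y)) * Real.logb 2 (p3 r x y)
            + (p4 a b x y * (p3 r x y / p2 x y)) * Real.logb 2 (p2 x y) := by
        intro a b r
        by_cases hq : p4 a b x y * (p3 r x y / p2 x y) = 0
        · rw [hq]; ring
        · have h4 : p4 a b x y ≠ 0 := fun h => hq (by rw [h]; ring)
          have hrat : p3 r x y / p2 x y ≠ 0 := fun h => hq (by rw [h]; ring)
          have h3 : p3 r x y ≠ 0 := fun h => hrat (by rw [h]; simp)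
          rw [Real.logb_mul h4 hrat, Real.logb_div h3 h2]
          ring
      have split : (∑ a, ∑ b, ∑ r, -((p4 a b x y * (p3 r x y / p2 x y)) *
            Real.logb 2 (p4 a b x y * (p3 r x y / p2 x y))))
          = (∑ a, ∑ b, ∑ r, -((p4 a b x y * (p3 r x y / p2 x y)) * Real.logb 2 (p4 a b x y)))
            - (∑ a, ∑ b, ∑ r, (p4 a b x y * (p3 r x y / p2 x y)) * Real.logb 2 (p3 r x y))
            + (∑ a, ∑ b, ∑ r, (p4 a b x y * (p3 r x y / p2 x y)) * Real.logb 2 (p2 x y)) := by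
        rw [Finset.sum_congr rfl fun a _ => Finset.sum_congr rfl fun b _ =>
          Finset.sum_congr rfl fun r _ => hpt a b r]
        simp [Finset.sum_add_distrib, Finset.sum_sub_distrib]
      rw [split]
      have T1 : (∑ a, ∑ b, ∑ r, -((p4 a b x y * (p3 r x y / p2 x y)) * Real.logb 2 (p4 a b x y)))
          = ∑ a, ∑ b, -(p4 a b x y * Real.logb 2 (p4 a b x y)) := by
        refine Finset.sum_congr rfl fun a _ => Finset.sum_congr rfl fun b _ => ?_
        rw [show (∑ r, -((p4 a b x y * (p3 r x y / p2 x y)) * Real.logb 2 (p4 a b x y)))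
            = -((∑ r, p4 a b x y * (p3 r x y / p2 x y)) * Real.logb 2 (p4 a b x y)) by
          rw [Finset.sum_neg_distrib, ← Finset.sum_mul]]
        rw [← Finset.mul_sum, hr1, mul_one]
      have T2 : (∑ a, ∑ b, ∑ r, (p4 a b x y * (p3 r x y / p2 x y)) * Real.logb 2 (p3 r x y))
          = ∑ r, p3 r x y * Real.logb 2 (p3 r x y) := by
        rw [show (∑ a, ∑ b, ∑ r, (p4 a b x y * (p3 r x y / p2 x y)) * Real.logb 2 (p3 r x y))
            = ∑ a, ∑ r, ∑ b, (p4 a b x y * (p3 r x y / p2 x y)) * Real.logb 2 (p3 r x y) from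
          Finset.sum_congr rfl fun a _ => Finset.sum_comm]
        rw [show (∑ a, ∑ r, ∑ b, (p4 a b x y * (p3 r x y / p2 x y)) * Real.logb 2 (p3 r x y))
            = ∑ r, ∑ a, ∑ b, (p4 a b x y * (p3 r x y / p2 x y)) * Real.logb 2 (p3 r x y) from
          Finset.sum_comm]
        refine Finset.sum_congr rfl fun r _ => ?_
        have : (∑ a, ∑ b, (p4 a b x y * (p3 r x y / p2 x y)) * Real.logb 2 (p3 r x y))
            = (∑ a, ∑ b, p4 a b x y) * ((p3 r x y / p2 x y) * Real.logb 2 (p3 r x y)) := by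
          rw [Finset.sum_mul]
          refine Finset.sum_congr rfl fun a _ => ?_
          rw [Finset.sum_mul]
          refine Finset.sum_congr rfl fun b _ => ?_
          ring
        rw [this, hab]
        field_simp
      have T3 : (∑ a, ∑ b, ∑ r, (p4 a b x y * (p3 r x y / p2 x y)) * Real.logb 2 (p2 x y))
          = p2 x y * Real.logb 2 (p2 x y) := by
        have inner : ∀ a b, (∑ r, (p4 a b x y * (p3 r x y / p2 x y)) * Real.logb 2 (p2 x y))
            = p4 a b x y * Real.logb 2 (p2 x y) := by
          intro a b
          rw [show (∑ r, (p4 a b x y * (p3 r x y / p2 x y)) * Real.logb 2 (p2 x y))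
              = (∑ r, p4 a b x y * (p3 r x y / p2 x y)) * Real.logb 2 (p2 x y) from
            (Finset.sum_mul _ _ _).symm]
          rw [← Finset.mul_sum, hr1, mul_one]
        rw [Finset.sum_congr rfl fun a _ => Finset.sum_congr rfl fun b _ => inner a b]
        rw [show (∑ a, ∑ b, p4 a b x y * Real.logb 2 (p2 x y))
            = (∑ a, ∑ b, p4 a b x y) * Real.logb 2 (p2 x y) by
          rw [Finset.sum_mul]
          exact Finset.sum_congr rfl fun a _ => (Finset.sum_mul _ _ _).symm]
        rw [hab]
      rw [T1, T2, T3, Finset.sum_neg_distrib]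
      ring
  rw [Finset.sum_congr rfl fun x _ => Finset.sum_congr rfl fun y _ => keyxy x y]
  simp [Finset.sum_add_distrib, Finset.sum_sub_distrib]

end EB2

namespace EB

open Finset Real

variable {Ω α β γ : Type*} [Fintype Ω]

/-- fiber mass -/
noncomputable def mass (p : Ω → ℝ) (f : Ω → α) (y : α) : ℝ :=
  letI := Classical.decEq α
  ∑ ω ∈ Finset.univ.filter (fun ω => f ω = y), p ω

lemma mass_nonneg {p : Ω → ℝ} (hp : ∀ ω, 0 ≤ p ω) (f : Ω → α) (y : α) :
    0 ≤ mass p f y := by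
  classical
  unfold mass
  exact Finset.sum_nonneg fun ω _ => hp ω

lemma entropy_eq [Fintype α] (p : Ω → ℝ) (f : Ω → α) :
    entropy p f = ∑ y : α, -(mass p f y * Real.logb 2 (mass p f y)) := by
  classical
  unfold entropy mass
  rw [← Finset.sum_subset (Finset.subset_univ (Finset.univ.image f))]
  intro y _ hy
  have h : Finset.univ.filter (fun ω => f ω = y) = (∅ : Finset Ω) := by
    apply Finset.filter_eq_empty_iff.mpr
    intro ω _
    exact fun h => hy (Finset.mem_image.mpr ⟨ω, Finset.mem_univ ω, h⟩)
  simp [h]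

lemma entropy_eq_partition (p : Ω → ℝ) (f : Ω → α) :
    entropy p f =
      letI := Classical.decEq Ω
      letI := Classical.decEq α
      ∑ s ∈ Finset.univ.image
          (fun ω => Finset.univ.filter (fun ω' : Ω => f ω' = f ω)),
        -((∑ ω' ∈ s, p ω') * Real.logb 2 (∑ ω' ∈ s, p ω')) := by
  letI := Classical.decEq Ω
  letI := Classical.decEq α
  have hfun : (fun ω => Finset.univ.filter (fun ω' : Ω => f ω' = f ω))
      = (fun y => Finset.univ.filter (fun ω' : Ω => f ω' = y)) ∘ f := rfl
  show entropy p f = ∑ s ∈ Finset.univ.image _, _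
  rw [hfun, ← Finset.image_image, Finset.sum_image]
  · unfold entropy
    rfl
  · intro y hy y' _ hee
    obtain ⟨ω, _, rfl⟩ := Finset.mem_image.mp hy
    have hmem : ω ∈ Finset.univ.filter (fun ω' : Ω => f ω' = y') := by
      have hee' : Finset.univ.filter (fun ω' : Ω => f ω' = f ω) = Finset.univ.filter (fun ω' : Ω => f ω' = y') := hee
      rw [← hee']; simp
    simpa using (Finset.mem_filter.mp hmem).2

lemma entropy_congr (p : Ω → ℝ) (f : Ω → α) (g : Ω → β)
    (h : ∀ ω₁ ω₂ : Ω, f ω₁ = f ω₂ ↔ g ω₁ = g ω₂) :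
    entropy p f = entropy p g := by
  rw [entropy_eq_partition p f, entropy_eq_partition p g]
  letI := Classical.decEq Ω
  letI := Classical.decEq α
  letI := Classical.decEq β
  congr 1
  apply Finset.image_congr
  intro ω _
  ext ω'
  simp [h ω' ω]

lemma entropy_comp_inj [Fintype α] (p : Ω → ℝ) (f : Ω → α) (e : α → β)
    (he : Function.Injective e) :
    entropy p (fun ω => e (f ω)) = entropy p f :=
  entropy_congr p _ f fun ω₁ ω₂ => ⟨fun h => he h, fun h => by simp [h]⟩

/-- fiber splitting -/
lemma mass_comp [Fintype α] [DecidableEq β] (p : Ω → ℝ) (f : Ω → α) (e : α → β) (b : β) :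
    mass p (fun ω => e (f ω)) b = ∑ y : α, if e y = b then mass p f y else 0 := by
  classical
  unfold mass
  rw [show (∑ y : α, if e y = b then (∑ ω ∈ Finset.univ.filter (fun ω => f ω = y), p ω) else 0)
      = ∑ y ∈ Finset.univ.filter (fun y : α => e y = b),
          ∑ ω ∈ Finset.univ.filter (fun ω => f ω = y), p ω from (Finset.sum_filter _ _).symm]
  rw [Finset.sum_fiberwise_eq_sum_filter Finset.univ
    (Finset.univ.filter (fun y : α => e y = b)) f p]
  congr 1
  ext ω
  simp

lemma sum_mass [Fintype α] (p : Ω → ℝ) (hp1 : ∑ ω, p ω = 1) (f : Ω → α) :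
    ∑ y : α, mass p f y = 1 := by
  classical
  unfold mass
  rw [Finset.sum_fiberwise Finset.univ f p]
  exact hp1

lemma entropy_const [Fintype β] (p : Ω → ℝ) (hp1 : ∑ ω, p ω = 1) (c : β) :
    entropy p (fun _ : Ω => c) = 0 := by
  classical
  unfold entropy
  rcases Finset.univ.eq_empty_or_nonempty (α := Ω) with h | h
  · simp [h]
  · rw [Finset.image_const h]
    simp [hp1]

lemma mass_fst [Fintype α] (p : Ω → ℝ) (q : Ω × α → ℝ)
    (hrow : ∀ ω, ∑ a, q (ω, a) = p ω) {τ : Type*} (k : Ω → τ) (t : τ) :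
    mass q (fun z => k z.1) t = mass p k t := by
  classical
  unfold mass
  rw [Finset.sum_filter, Finset.sum_filter, Fintype.sum_prod_type]
  refine Finset.sum_congr rfl fun ω _ => ?_
  by_cases hk : k ω = t
  · simp only [hk, if_true]
    exact hrow ω
  · simp [hk]

lemma entropy_eq_of_mass {Ω' : Type*} [Fintype Ω'] [Fintype α] (p : Ω → ℝ) (q : Ω' → ℝ) (F : Ω → α) (G : Ω' → α)
    (hm : ∀ v, mass p F v = mass q G v) : entropy p F = entropy q G := by
  rw [entropy_eq, entropy_eq]
  exact Finset.sum_congr rfl fun v _ => by rw [hm v]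

lemma mass_comp_eq {Ω' : Type*} [Fintype Ω'] [Fintype α] [DecidableEq β] (p : Ω → ℝ) (q : Ω' → ℝ) (F : Ω → α) (G : Ω' → α)
    (hm : ∀ v, mass p F v = mass q G v) (e : α → β) (b : β) :
    mass p (fun ω => e (F ω)) b = mass q (fun w => e (G w)) b := by
  rw [mass_comp, mass_comp]
  exact Finset.sum_congr rfl fun v _ => by rw [hm v]


lemma mass_q_pair {Ω α σ τ : Type*} [Fintype Ω] [Fintype α]
    (p : Ω → ℝ) (c : α → σ → ℝ) (s : Ω → σ) (G : Ω → τ) (e : τ → σ)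
    (hes : ∀ ω, e (G ω) = s ω) (a : α) (t : τ) :
    mass (fun z : Ω × α => p z.1 * c z.2 (s z.1)) (fun z => (z.2, G z.1)) (a, t)
      = mass p G t * c a (e t) := by
  classical
  unfold mass
  rw [Finset.sum_filter, Fintype.sum_prod_type]
  simp only []
  have hω : ∀ ω, (∑ a' : α, if ((a' : α), G ω) = (a, t) then p ω * c a' (s ω) else 0)
      = if G ω = t then p ω * c a (e t) else 0 := by
    intro ω
    by_cases hG : G ω = t
    · simp only [hG, Prod.mk.injEq, and_true]
      rw [Finset.sum_ite_eq' Finset.univ a (fun a' => p ω * c a' (s ω))]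
      rw [← hes ω, hG]
      simp
    · simp [Prod.ext_iff, hG]
  rw [Finset.sum_congr rfl fun ω _ => hω ω]
  rw [Finset.sum_congr rfl fun ω _ =>
    (show (if G ω = t then p ω * c a (e t) else 0)
        = (if G ω = t then p ω else 0) * c a (e t) by split_ifs <;> simp)]
  rw [← Finset.sum_mul, ← Finset.sum_filter]

lemma reorder5 {κ α β γ δ : Type*} [Fintype κ] [Fintype α] [Fintype β] [Fintype γ] [Fintype δ]
    (T : κ → α → β → γ → δ → ℝ) :
    (∑ k : κ, ∑ a, ∑ b, ∑ x, ∑ y, T k a b x y)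
      = ∑ a, ∑ b, ∑ x, ∑ y, ∑ k : κ, T k a b x y := by
  calc (∑ k : κ, ∑ a, ∑ b, ∑ x, ∑ y, T k a b x y)
      = ∑ a, ∑ k : κ, ∑ b, ∑ x, ∑ y, T k a b x y := Finset.sum_comm
    _ = ∑ a, ∑ b, ∑ k : κ, ∑ x, ∑ y, T k a b x y :=
        Finset.sum_congr rfl fun a _ => Finset.sum_comm
    _ = ∑ a, ∑ b, ∑ x, ∑ k : κ, ∑ y, T k a b x y :=
        Finset.sum_congr rfl fun a _ => Finset.sum_congr rfl fun b _ => Finset.sum_comm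
    _ = ∑ a, ∑ b, ∑ x, ∑ y, ∑ k : κ, T k a b x y :=
        Finset.sum_congr rfl fun a _ => Finset.sum_congr rfl fun b _ =>
          Finset.sum_congr rfl fun x _ => Finset.sum_comm

lemma ci_core' {α β γ δ : Type*} [Fintype α] [Fintype β] [Fintype γ] [Fintype δ]
    (m5 : α × α × β × γ × δ → ℝ) (m4 : α × β × γ × δ → ℝ)
    (m3 : α × γ × δ → ℝ) (m2 : γ × δ → ℝ)
    (h4n : ∀ a b x y, 0 ≤ m4 (a, b, x, y))
    (hm5 : ∀ (r a : α) (b : β) (x : γ) (y : δ),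
      m5 (r, a, b, x, y) = m4 (a, b, x, y) * (m3 (r, x, y) / m2 (x, y)))
    (marg1 : ∀ a x y, (∑ b, m4 (a, b, x, y)) = m3 (a, x, y))
    (marg2 : ∀ x y, (∑ a, m3 (a, x, y)) = m2 (x, y)) :
    (∑ w, -(m5 w * Real.logb 2 (m5 w)))
      = (∑ v, -(m4 v * Real.logb 2 (m4 v)))
        + (∑ u, -(m3 u * Real.logb 2 (m3 u)))
        - ∑ s, -(m2 s * Real.logb 2 (m2 s)) := by
  simp only [Fintype.sum_prod_type]
  simp only [hm5]
  rw [reorder5 (fun r a b x y => -(m4 (a, b, x, y) * (m3 (r, x, y) / m2 (x, y)) *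
    Real.logb 2 (m4 (a, b, x, y) * (m3 (r, x, y) / m2 (x, y)))))]
  exact EB2.ci_core (fun a b x y => m4 (a, b, x, y)) (fun r x y => m3 (r, x, y))
    (fun x y => m2 (x, y)) h4n marg1 marg2

lemma entropy_submod [Fintype α] [Fintype β] [Fintype γ]
    (p : Ω → ℝ) (hp : ∀ ω, 0 ≤ p ω) (hp1 : ∑ ω, p ω = 1)
    (f : Ω → α) (g : Ω → β) (h : Ω → γ) :
    entropy p h + entropy p (fun ω => (f ω, g ω, h ω)) ≤
      entropy p (fun ω => (f ω, h ω)) + entropy p (fun ω => (g ω, h ω)) := by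
  classical
  set m : α → β → γ → ℝ := fun a b c => mass p (fun ω => (f ω, g ω, h ω)) (a, b, c) with hm
  have hmnn : ∀ a b c, 0 ≤ m a b c := fun a b c => mass_nonneg hp _ _
  have htot : ∑ a, ∑ b, ∑ c, m a b c = 1 := by
    have := sum_mass p hp1 (fun ω => (f ω, g ω, h ω))
    rw [Fintype.sum_prod_type] at this
    simpa [Fintype.sum_prod_type] using this
  have hfh : ∀ a c, mass p (fun ω => (f ω, h ω)) (a, c) = ∑ b, m a b c := by
    intro a c
    have hh := mass_comp p (fun ω => (f ω, g ω, h ω)) (fun v => (v.1, v.2.2)) (a, c)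
    simp only [] at hh
    rw [hh]
    simp [Fintype.sum_prod_type, Prod.ext_iff, ite_and, Finset.sum_ite_eq', hm]
  have hgh : ∀ b c, mass p (fun ω => (g ω, h ω)) (b, c) = ∑ a, m a b c := by
    intro b c
    have hh := mass_comp p (fun ω => (f ω, g ω, h ω)) (fun v => (v.2.1, v.2.2)) (b, c)
    simp only [] at hh
    rw [hh]
    simp [Fintype.sum_prod_type, Prod.ext_iff, ite_and, Finset.sum_ite_eq', hm]
  have hhh : ∀ c, mass p h c = ∑ a, ∑ b, m a b c := by
    intro c
    have hh := mass_comp p (fun ω => (f ω, g ω, h ω)) (fun v => v.2.2) c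
    simp only [] at hh
    rw [hh]
    simp [Fintype.sum_prod_type, Finset.sum_ite_eq', hm]
  have E1 : entropy p h = ∑ c, -((∑ a, ∑ b, m a b c) * Real.logb 2 (∑ a, ∑ b, m a b c)) := by
    rw [entropy_eq]
    exact Finset.sum_congr rfl fun c _ => by rw [hhh c]
  have E2 : entropy p (fun ω => (f ω, g ω, h ω))
      = ∑ a, ∑ b, ∑ c, -(m a b c * Real.logb 2 (m a b c)) := by
    rw [entropy_eq, Fintype.sum_prod_type]
    exact Finset.sum_congr rfl fun a _ => by rw [Fintype.sum_prod_type]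
  have E3 : entropy p (fun ω => (f ω, h ω))
      = ∑ a, ∑ c, -((∑ b, m a b c) * Real.logb 2 (∑ b, m a b c)) := by
    rw [entropy_eq, Fintype.sum_prod_type]
    exact Finset.sum_congr rfl fun a _ => Finset.sum_congr rfl fun c _ => by rw [hfh a c]
  have E4 : entropy p (fun ω => (g ω, h ω))
      = ∑ b, ∑ c, -((∑ a, m a b c) * Real.logb 2 (∑ a, m a b c)) := by
    rw [entropy_eq, Fintype.sum_prod_type]
    exact Finset.sum_congr rfl fun b _ => Finset.sum_congr rfl fun c _ => by rw [hgh b c]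
  rw [E1, E2, E3, E4]
  exact EB2.submod_core m hmnn htot


lemma entropy_subadd {Ω α β : Type*} [Fintype Ω] [Fintype α] [Fintype β]
    (p : Ω → ℝ) (hp : ∀ ω, 0 ≤ p ω) (hp1 : ∑ ω, p ω = 1) (f : Ω → α) (g : Ω → β) :
    entropy p (fun ω => (f ω, g ω)) ≤ entropy p f + entropy p g := by
  have h := entropy_submod p hp hp1 f g (fun _ : Ω => (0 : Fin 1))
  have e0 : entropy p (fun _ : Ω => (0 : Fin 1)) = 0 := entropy_const p hp1 _
  have e1 : entropy p (fun ω => (f ω, g ω, (0 : Fin 1))) = entropy p (fun ω => (f ω, g ω)) :=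
    entropy_congr p _ _ (fun z w => by simp [Prod.ext_iff])
  have e2 : entropy p (fun ω => (f ω, (0 : Fin 1))) = entropy p f :=
    entropy_congr p _ _ (fun z w => by simp [Prod.ext_iff])
  have e3 : entropy p (fun ω => (g ω, (0 : Fin 1))) = entropy p g :=
    entropy_congr p _ _ (fun z w => by simp [Prod.ext_iff])
  linarith [h]

lemma single_copy {Ω α β γ δ : Type*} [Fintype Ω] [Fintype α] [Fintype β] [Fintype γ] [Fintype δ]
    (p : Ω → ℝ) (hp : ∀ ω, 0 ≤ p ω) (hp1 : ∑ ω, p ω = 1)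
    (A : Ω → α) (B : Ω → β) (X : Ω → γ) (Y : Ω → δ) (t : ℝ)
    (hXY : entropy p (fun ω => (X ω, Y ω)) ≤ 3 * t)
    (hAX : entropy p (fun ω => (A ω, X ω)) ≤ 3 * t)
    (hAY : entropy p (fun ω => (A ω, Y ω)) ≤ 3 * t)
    (hBX : entropy p (fun ω => (B ω, X ω)) ≤ 3 * t)
    (hBY : entropy p (fun ω => (B ω, Y ω)) ≤ 3 * t) :
    entropy p (fun ω => (A ω, B ω)) ≤ 66 / 17 * t ∨
    entropy p (fun ω => (A ω, X ω, Y ω)) ≤ 66 / 17 * t ∨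
    entropy p (fun ω => (B ω, X ω, Y ω)) ≤ 66 / 17 * t ∨
    entropy p A ≤ 33 / 17 * t ∨ entropy p X ≤ 33 / 17 * t ∨ entropy p Y ≤ 33 / 17 * t := by
  classical
  set q : Ω × α → ℝ := fun z =>
    p z.1 * (mass p (fun ω => (A ω, X ω, Y ω)) (z.2, X z.1, Y z.1)
      / mass p (fun ω => (X ω, Y ω)) (X z.1, Y z.1)) with hqdef
  have hq0 : ∀ z, 0 ≤ q z := fun z =>
    mul_nonneg (hp z.1) (div_nonneg (mass_nonneg hp _ _) (mass_nonneg hp _ _))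
  have hsplitA : ∀ x y, (∑ a, mass p (fun ω => (A ω, X ω, Y ω)) (a, x, y))
      = mass p (fun ω => (X ω, Y ω)) (x, y) := by
    intro x y
    rw [show mass p (fun ω => (X ω, Y ω)) (x, y)
        = ∑ v : α × γ × δ, if v.2 = (x, y) then mass p (fun ω => (A ω, X ω, Y ω)) v else 0 from
      mass_comp p (fun ω => (A ω, X ω, Y ω)) (fun v => v.2) (x, y)]
    rw [Fintype.sum_prod_type]
    simp
  have hP3le : ∀ a x y, mass p (fun ω => (A ω, X ω, Y ω)) (a, x, y)
      ≤ mass p (fun ω => (X ω, Y ω)) (x, y) := by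
    intro a x y
    rw [← hsplitA x y]
    exact Finset.single_le_sum (f := fun a' => mass p (fun ω => (A ω, X ω, Y ω)) (a', x, y))
      (fun a' _ => mass_nonneg hp _ _) (Finset.mem_univ a)
  have hple : ∀ ω, p ω ≤ mass p (fun ω' => (X ω', Y ω')) (X ω, Y ω) := by
    intro ω
    unfold mass
    exact Finset.single_le_sum (fun i _ => hp i) (by simp)
  have hrow : ∀ ω, ∑ a, q (ω, a) = p ω := by
    intro ω
    by_cases hz : p ω = 0
    · simp [hqdef, hz]
    · have hpos : 0 < mass p (fun ω' => (X ω', Y ω')) (X ω, Y ω) :=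
        lt_of_lt_of_le (lt_of_le_of_ne (hp ω) (Ne.symm hz)) (hple ω)
      calc (∑ a, q (ω, a))
          = ∑ a, p ω * (mass p (fun ω' => (A ω', X ω', Y ω')) (a, X ω, Y ω)
              / mass p (fun ω' => (X ω', Y ω')) (X ω, Y ω)) := rfl
        _ = p ω * ((∑ a, mass p (fun ω' => (A ω', X ω', Y ω')) (a, X ω, Y ω))
              / mass p (fun ω' => (X ω', Y ω')) (X ω, Y ω)) := by
            rw [← Finset.mul_sum, Finset.sum_div]
        _ = p ω := by rw [hsplitA, div_self (ne_of_gt hpos), mul_one]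
  have hq1 : ∑ z, q z = 1 := by
    rw [Fintype.sum_prod_type, Finset.sum_congr rfl fun ω _ => hrow ω]
    exact hp1
  have eX : entropy q (fun z => X z.1) = entropy p X :=
    entropy_eq_of_mass q p _ _ (fun v => mass_fst p q hrow X v)
  have eY : entropy q (fun z => Y z.1) = entropy p Y :=
    entropy_eq_of_mass q p _ _ (fun v => mass_fst p q hrow Y v)
  have eAB : entropy q (fun z => (A z.1, B z.1)) = entropy p (fun ω => (A ω, B ω)) :=
    entropy_eq_of_mass q p _ _ (fun v => mass_fst p q hrow (fun ω => (A ω, B ω)) v)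
  have eAX : entropy q (fun z => (A z.1, X z.1)) = entropy p (fun ω => (A ω, X ω)) :=
    entropy_eq_of_mass q p _ _ (fun v => mass_fst p q hrow (fun ω => (A ω, X ω)) v)
  have eAY : entropy q (fun z => (A z.1, Y z.1)) = entropy p (fun ω => (A ω, Y ω)) :=
    entropy_eq_of_mass q p _ _ (fun v => mass_fst p q hrow (fun ω => (A ω, Y ω)) v)
  have eBX : entropy q (fun z => (B z.1, X z.1)) = entropy p (fun ω => (B ω, X ω)) :=
    entropy_eq_of_mass q p _ _ (fun v => mass_fst p q hrow (fun ω => (B ω, X ω)) v)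
  have eBY : entropy q (fun z => (B z.1, Y z.1)) = entropy p (fun ω => (B ω, Y ω)) :=
    entropy_eq_of_mass q p _ _ (fun v => mass_fst p q hrow (fun ω => (B ω, Y ω)) v)
  have eABY : entropy q (fun z => (A z.1, (B z.1, Y z.1))) = entropy p (fun ω => (A ω, B ω, Y ω)) :=
    entropy_eq_of_mass q p _ _ (fun v => mass_fst p q hrow (fun ω => (A ω, B ω, Y ω)) v)
  have eAXY : entropy q (fun z => (A z.1, (X z.1, Y z.1))) = entropy p (fun ω => (A ω, X ω, Y ω)) :=
    entropy_eq_of_mass q p _ _ (fun v => mass_fst p q hrow (fun ω => (A ω, X ω, Y ω)) v)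
  have eBXY : entropy q (fun z => (B z.1, (X z.1, Y z.1))) = entropy p (fun ω => (B ω, X ω, Y ω)) :=
    entropy_eq_of_mass q p _ _ (fun v => mass_fst p q hrow (fun ω => (B ω, X ω, Y ω)) v)
  have eABXY : entropy q (fun z => (A z.1, (B z.1, (X z.1, Y z.1)))) = entropy p (fun ω => (A ω, B ω, X ω, Y ω)) :=
    entropy_eq_of_mass q p _ _ (fun v => mass_fst p q hrow (fun ω => (A ω, B ω, X ω, Y ω)) v)
  have baseR : ∀ v : α × γ × δ, mass q (fun z => (z.2, X z.1, Y z.1)) v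
      = mass p (fun ω => (A ω, X ω, Y ω)) v := by
    rintro ⟨a, x, y⟩
    have h1 : mass q (fun z => (z.2, X z.1, Y z.1)) (a, x, y)
        = mass p (fun ω => (X ω, Y ω)) (x, y) *
          (mass p (fun ω => (A ω, X ω, Y ω)) (a, x, y)
            / mass p (fun ω => (X ω, Y ω)) (x, y)) :=
      mass_q_pair p (fun a' v => mass p (fun ω => (A ω, X ω, Y ω)) (a', v.1, v.2)
        / mass p (fun ω => (X ω, Y ω)) v) (fun ω => (X ω, Y ω))
        (fun ω => (X ω, Y ω)) id (fun ω => rfl) a (x, y)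
    rw [h1]
    by_cases h2 : mass p (fun ω => (X ω, Y ω)) (x, y) = 0
    · rw [h2, zero_mul]
      exact (le_antisymm (h2 ▸ hP3le a x y) (mass_nonneg hp _ _)).symm
    · rw [mul_comm, div_mul_cancel₀ _ h2]
  have eR : entropy q (fun z => z.2) = entropy p A :=
    entropy_eq_of_mass q p _ _ (fun v => mass_comp_eq q p _ _ baseR (fun w => w.1) v)
  have eRX : entropy q (fun z => (z.2, X z.1)) = entropy p (fun ω => (A ω, X ω)) :=
    entropy_eq_of_mass q p _ _ (fun v => mass_comp_eq q p _ _ baseR (fun w => (w.1, w.2.1)) v)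
  have eRY : entropy q (fun z => (z.2, Y z.1)) = entropy p (fun ω => (A ω, Y ω)) :=
    entropy_eq_of_mass q p _ _ (fun v => mass_comp_eq q p _ _ baseR (fun w => (w.1, w.2.2)) v)
  have mass5 : ∀ (r a : α) (b : β) (x : γ) (y : δ),
      mass q (fun z => (z.2, A z.1, B z.1, X z.1, Y z.1)) (r, a, b, x, y)
        = mass p (fun ω => (A ω, B ω, X ω, Y ω)) (a, b, x, y)
          * (mass p (fun ω => (A ω, X ω, Y ω)) (r, x, y)
            / mass p (fun ω => (X ω, Y ω)) (x, y)) :=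
    fun r a b x y =>
      mass_q_pair p (fun a' v => mass p (fun ω => (A ω, X ω, Y ω)) (a', v.1, v.2)
        / mass p (fun ω => (X ω, Y ω)) v) (fun ω => (X ω, Y ω))
        (fun ω => (A ω, B ω, X ω, Y ω)) (fun w => w.2.2) (fun ω => rfl) r (a, b, x, y)
  have marg1 : ∀ (a : α) (x : γ) (y : δ),
      (∑ b, mass p (fun ω => (A ω, B ω, X ω, Y ω)) (a, b, x, y))
        = mass p (fun ω => (A ω, X ω, Y ω)) (a, x, y) := by
    intro a x y
    rw [show mass p (fun ω => (A ω, X ω, Y ω)) (a, x, y)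
        = ∑ v : α × β × γ × δ, if (v.1, v.2.2) = (a, x, y)
            then mass p (fun ω => (A ω, B ω, X ω, Y ω)) v else 0 from
      mass_comp p (fun ω => (A ω, B ω, X ω, Y ω)) (fun v => (v.1, v.2.2)) (a, x, y)]
    simp [Fintype.sum_prod_type, Prod.ext_iff, ite_and]
  have eFULL : entropy q (fun z => (z.2, A z.1, B z.1, X z.1, Y z.1))
      = entropy p (fun ω => (A ω, B ω, X ω, Y ω))
        + entropy p (fun ω => (A ω, X ω, Y ω)) - entropy p (fun ω => (X ω, Y ω)) := by
    rw [entropy_eq q (fun z => (z.2, A z.1, B z.1, X z.1, Y z.1)),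
        entropy_eq p (fun ω => (A ω, B ω, X ω, Y ω)),
        entropy_eq p (fun ω => (A ω, X ω, Y ω)),
        entropy_eq p (fun ω => (X ω, Y ω))]
    exact ci_core' _ _ _ _ (fun a b x y => mass_nonneg hp _ _) mass5 marg1 hsplitA
  have I1 := entropy_submod q hq0 hq1 (fun z => A z.1) (fun z => B z.1) (fun z => z.2)
  have I2 := entropy_submod q hq0 hq1 (fun z => A z.1) (fun z => z.2) (fun z => X z.1)
  have I3 := entropy_submod q hq0 hq1 (fun z => A z.1) (fun z => z.2) (fun z => Y z.1)
  have I4 := entropy_submod q hq0 hq1 (fun z => z.2) (fun z => A z.1)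
    (fun z => (B z.1, X z.1, Y z.1))
  have I5 := entropy_submod q hq0 hq1 (fun z => B z.1) (fun z => z.2) (fun z => X z.1)
  have I6 := entropy_submod q hq0 hq1 (fun z => B z.1) (fun z => z.2) (fun z => Y z.1)
  have I7 := entropy_submod q hq0 hq1 (fun z => z.2) (fun z => B z.1)
    (fun z => (A z.1, X z.1, Y z.1))
  have I8 := entropy_submod q hq0 hq1 (fun z => X z.1) (fun z => Y z.1)
    (fun z => (A z.1, z.2))
  have I9 := entropy_submod q hq0 hq1 (fun z => X z.1) (fun z => Y z.1)
    (fun z => (B z.1, z.2))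
  have I10 := entropy_submod q hq0 hq1 (fun z => z.2) (fun z => X z.1)
    (fun z => (A z.1, B z.1, Y z.1))
  have I11 := entropy_submod q hq0 hq1 (fun z => z.2) (fun z => Y z.1)
    (fun z => (A z.1, B z.1))
  have c1 : entropy q (fun z => (z.2, (B z.1, (X z.1, Y z.1)))) = entropy q (fun z => (X z.1, (Y z.1, (B z.1, z.2)))) :=
    entropy_congr q _ _ (fun z w => by simp only [Prod.ext_iff]; tauto)
  have c2 : entropy q (fun z => (z.2, (B z.1, (A z.1, (X z.1, Y z.1))))) = entropy q (fun z => (z.2, (A z.1, (B z.1, (X z.1, Y z.1))))) :=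
    entropy_congr q _ _ (fun z w => by simp only [Prod.ext_iff]; tauto)
  have c3 : entropy q (fun z => (z.2, (A z.1, (X z.1, Y z.1)))) = entropy q (fun z => (X z.1, (Y z.1, (A z.1, z.2)))) :=
    entropy_congr q _ _ (fun z w => by simp only [Prod.ext_iff]; tauto)
  have c4 : entropy q (fun z => (B z.1, (A z.1, (X z.1, Y z.1)))) = entropy q (fun z => (A z.1, (B z.1, (X z.1, Y z.1)))) :=
    entropy_congr q _ _ (fun z w => by simp only [Prod.ext_iff]; tauto)
  have c5 : entropy q (fun z => (z.2, (X z.1, (A z.1, (B z.1, Y z.1))))) = entropy q (fun z => (z.2, (A z.1, (B z.1, (X z.1, Y z.1))))) :=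
    entropy_congr q _ _ (fun z w => by simp only [Prod.ext_iff]; tauto)
  have c6 : entropy q (fun z => (X z.1, (A z.1, (B z.1, Y z.1)))) = entropy q (fun z => (A z.1, (B z.1, (X z.1, Y z.1)))) :=
    entropy_congr q _ _ (fun z w => by simp only [Prod.ext_iff]; tauto)
  have c7 : entropy q (fun z => (z.2, (Y z.1, (A z.1, B z.1)))) = entropy q (fun z => (z.2, (A z.1, (B z.1, Y z.1)))) :=
    entropy_congr q _ _ (fun z w => by simp only [Prod.ext_iff]; tauto)
  have c8 : entropy q (fun z => (z.2, (A z.1, B z.1))) = entropy q (fun z => (A z.1, (B z.1, z.2))) :=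
    entropy_congr q _ _ (fun z w => by simp only [Prod.ext_iff]; tauto)
  have c9 : entropy q (fun z => (Y z.1, (A z.1, B z.1))) = entropy q (fun z => (A z.1, (B z.1, Y z.1))) :=
    entropy_congr q _ _ (fun z w => by simp only [Prod.ext_iff]; tauto)
  have c10 : entropy q (fun z => (X z.1, (A z.1, z.2))) = entropy q (fun z => (A z.1, (z.2, X z.1))) :=
    entropy_congr q _ _ (fun z w => by simp only [Prod.ext_iff]; tauto)
  have c11 : entropy q (fun z => (Y z.1, (A z.1, z.2))) = entropy q (fun z => (A z.1, (z.2, Y z.1))) :=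
    entropy_congr q _ _ (fun z w => by simp only [Prod.ext_iff]; tauto)
  have c12 : entropy q (fun z => (X z.1, (B z.1, z.2))) = entropy q (fun z => (B z.1, (z.2, X z.1))) :=
    entropy_congr q _ _ (fun z w => by simp only [Prod.ext_iff]; tauto)
  have c13 : entropy q (fun z => (Y z.1, (B z.1, z.2))) = entropy q (fun z => (B z.1, (z.2, Y z.1))) :=
    entropy_congr q _ _ (fun z w => by simp only [Prod.ext_iff]; tauto)
  rw [c1] at I4
  rw [c2, c3, c4] at I7
  rw [c5, c6] at I10
  rw [c7, c8, c9] at I11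
  rw [c10, c11] at I8
  rw [c12, c13] at I9
  have star : entropy p (fun ω => (A ω, B ω)) + 4 * entropy p (fun ω => (A ω, X ω, Y ω))
      + entropy p (fun ω => (B ω, X ω, Y ω)) + entropy p A
      + 2 * entropy p X + 2 * entropy p Y ≤ 33 * t := by
    linarith [I1, I2, I3, I4, I5, I6, I7, I8, I9, I10, I11, eX, eY, eAB, eAX, eAY, eBX,
      eBY, eABY, eAXY, eBXY, eABXY, eR, eRX, eRY, eFULL, hXY, hAX, hAY, hBX, hBY]
  by_contra hcon
  push_neg at hcon
  obtain ⟨h1, h2, h3, h4, h5, h6⟩ := hcon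
  linarith

end EB

/-- If each of the ten joint entropies `H[XY], H[AX], H[AY], H[BX], H[BY],
H[X'Y'], H[A'X'], H[A'Y'], H[B'X'], H[B'Y']` is at most `3t`, then the minimum
of the fifteen joint entropies `H[AB], H[AXY], H[BXY], H[A'B'], H[A'X'Y'],
H[B'X'Y'], H[A'A], H[X'A], H[Y'A], H[A'X], H[X'X], H[Y'X], H[A'Y], H[X'Y],
H[Y'Y]` is at most `(66/17)·t`. -/
theorem entropic_bound_eight_vars
    {Ω α₁ α₂ α₃ α₄ β₁ β₂ β₃ β₄ : Type*} [Fintype Ω]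
    [Fintype α₁] [Fintype α₂] [Fintype α₃] [Fintype α₄]
    [Fintype β₁] [Fintype β₂] [Fintype β₃] [Fintype β₄]
    (p : Ω → ℝ) (hp : ∀ ω, 0 ≤ p ω) (hp1 : ∑ ω, p ω = 1)
    (A : Ω → α₁) (B : Ω → α₂) (X : Ω → α₃) (Y : Ω → α₄)
    (A' : Ω → β₁) (B' : Ω → β₂) (X' : Ω → β₃) (Y' : Ω → β₄)
    (t : ℝ) (ht : 0 ≤ t)
    (hXY : entropy p (fun ω => (X ω, Y ω)) ≤ 3 * t)
    (hAX : entropy p (fun ω => (A ω, X ω)) ≤ 3 * t)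
    (hAY : entropy p (fun ω => (A ω, Y ω)) ≤ 3 * t)
    (hBX : entropy p (fun ω => (B ω, X ω)) ≤ 3 * t)
    (hBY : entropy p (fun ω => (B ω, Y ω)) ≤ 3 * t)
    (hXY' : entropy p (fun ω => (X' ω, Y' ω)) ≤ 3 * t)
    (hAX' : entropy p (fun ω => (A' ω, X' ω)) ≤ 3 * t)
    (hAY' : entropy p (fun ω => (A' ω, Y' ω)) ≤ 3 * t)
    (hBX' : entropy p (fun ω => (B' ω, X' ω)) ≤ 3 * t)
    (hBY' : entropy p (fun ω => (B' ω, Y' ω)) ≤ 3 * t) :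
    List.foldr min (entropy p (fun ω => (Y' ω, Y ω)))
      [entropy p (fun ω => (A ω, B ω)),
       entropy p (fun ω => (A ω, X ω, Y ω)),
       entropy p (fun ω => (B ω, X ω, Y ω)),
       entropy p (fun ω => (A' ω, B' ω)),
       entropy p (fun ω => (A' ω, X' ω, Y' ω)),
       entropy p (fun ω => (B' ω, X' ω, Y' ω)),
       entropy p (fun ω => (A' ω, A ω)),
       entropy p (fun ω => (X' ω, A ω)),
       entropy p (fun ω => (Y' ω, A ω)),
       entropy p (fun ω => (A' ω, X ω)),
       entropy p (fun ω => (X' ω, X ω)),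
       entropy p (fun ω => (Y' ω, X ω)),
       entropy p (fun ω => (A' ω, Y ω)),
       entropy p (fun ω => (X' ω, Y ω))]
      ≤ (66 / 17) * t := by
  have hc1 := EB.single_copy p hp hp1 A B X Y t hXY hAX hAY hBX hBY
  have hc2 := EB.single_copy p hp hp1 A' B' X' Y' t hXY' hAX' hAY' hBX' hBY'
  simp only [List.foldr_cons, List.foldr_nil]
  rcases hc1 with h|h|h|h|h|h
  · exact le_trans (min_le_left _ _) h
  · exact le_trans (le_trans (min_le_right _ _) (min_le_left _ _)) h
  · exact le_trans (le_trans (min_le_right _ _) (le_trans (min_le_right _ _) (min_le_left _ _))) h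
  · rcases hc2 with g|g|g|g|g|g
    · exact le_trans (le_trans (min_le_right _ _) (le_trans (min_le_right _ _) (le_trans (min_le_right _ _) (min_le_left _ _)))) g
    · exact le_trans (le_trans (min_le_right _ _) (le_trans (min_le_right _ _) (le_trans (min_le_right _ _) (le_trans (min_le_right _ _) (min_le_left _ _))))) g
    · exact le_trans (le_trans (min_le_right _ _) (le_trans (min_le_right _ _) (le_trans (min_le_right _ _) (le_trans (min_le_right _ _) (le_trans (min_le_right _ _) (min_le_left _ _)))))) g
    · refine le_trans (le_trans (min_le_right _ _) (le_trans (min_le_right _ _) (le_trans (min_le_right _ _) (le_trans (min_le_right _ _) (le_trans (min_le_right _ _) (le_trans (min_le_right _ _) (min_le_left _ _))))))) ?_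
      have hs := EB.entropy_subadd p hp hp1 A' A
      linarith [h, g, hs]
    · refine le_trans (le_trans (min_le_right _ _) (le_trans (min_le_right _ _) (le_trans (min_le_right _ _) (le_trans (min_le_right _ _) (le_trans (min_le_right _ _) (le_trans (min_le_right _ _) (le_trans (min_le_right _ _) (min_le_left _ _)))))))) ?_
      have hs := EB.entropy_subadd p hp hp1 X' A
      linarith [h, g, hs]
    · refine le_trans (le_trans (min_le_right _ _) (le_trans (min_le_right _ _) (le_trans (min_le_right _ _) (le_trans (min_le_right _ _) (le_trans (min_le_right _ _) (le_trans (min_le_right _ _) (le_trans (min_le_right _ _) (le_trans (min_le_right _ _) (min_le_left _ _))))))))) ?_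
      have hs := EB.entropy_subadd p hp hp1 Y' A
      linarith [h, g, hs]
  · rcases hc2 with g|g|g|g|g|g
    · exact le_trans (le_trans (min_le_right _ _) (le_trans (min_le_right _ _) (le_trans (min_le_right _ _) (min_le_left _ _)))) g
    · exact le_trans (le_trans (min_le_right _ _) (le_trans (min_le_right _ _) (le_trans (min_le_right _ _) (le_trans (min_le_right _ _) (min_le_left _ _))))) g
    · exact le_trans (le_trans (min_le_right _ _) (le_trans (min_le_right _ _) (le_trans (min_le_right _ _) (le_trans (min_le_right _ _) (le_trans (min_le_right _ _) (min_le_left _ _)))))) g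
    · refine le_trans (le_trans (min_le_right _ _) (le_trans (min_le_right _ _) (le_trans (min_le_right _ _) (le_trans (min_le_right _ _) (le_trans (min_le_right _ _) (le_trans (min_le_right _ _) (le_trans (min_le_right _ _) (le_trans (min_le_right _ _) (le_trans (min_le_right _ _) (min_le_left _ _)))))))))) ?_
      have hs := EB.entropy_subadd p hp hp1 A' X
      linarith [h, g, hs]
    · refine le_trans (le_trans (min_le_right _ _) (le_trans (min_le_right _ _) (le_trans (min_le_right _ _) (le_trans (min_le_right _ _) (le_trans (min_le_right _ _) (le_trans (min_le_right _ _) (le_trans (min_le_right _ _) (le_trans (min_le_right _ _) (le_trans (min_le_right _ _) (le_trans (min_le_right _ _) (min_le_left _ _))))))))))) ?_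
      have hs := EB.entropy_subadd p hp hp1 X' X
      linarith [h, g, hs]
    · refine le_trans (le_trans (min_le_right _ _) (le_trans (min_le_right _ _) (le_trans (min_le_right _ _) (le_trans (min_le_right _ _) (le_trans (min_le_right _ _) (le_trans (min_le_right _ _) (le_trans (min_le_right _ _) (le_trans (min_le_right _ _) (le_trans (min_le_right _ _) (le_trans (min_le_right _ _) (le_trans (min_le_right _ _) (min_le_left _ _)))))))))))) ?_
      have hs := EB.entropy_subadd p hp hp1 Y' X
      linarith [h, g, hs]
  · rcases hc2 with g|g|g|g|g|g
    · exact le_trans (le_trans (min_le_right _ _) (le_trans (min_le_right _ _) (le_trans (min_le_right _ _) (min_le_left _ _)))) g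
    · exact le_trans (le_trans (min_le_right _ _) (le_trans (min_le_right _ _) (le_trans (min_le_right _ _) (le_trans (min_le_right _ _) (min_le_left _ _))))) g
    · exact le_trans (le_trans (min_le_right _ _) (le_trans (min_le_right _ _) (le_trans (min_le_right _ _) (le_trans (min_le_right _ _) (le_trans (min_le_right _ _) (min_le_left _ _)))))) g
    · refine le_trans (le_trans (min_le_right _ _) (le_trans (min_le_right _ _) (le_trans (min_le_right _ _) (le_trans (min_le_right _ _) (le_trans (min_le_right _ _) (le_trans (min_le_right _ _) (le_trans (min_le_right _ _) (le_trans (min_le_right _ _) (le_trans (min_le_right _ _) (le_trans (min_le_right _ _) (le_trans (min_le_right _ _) (le_trans (min_le_right _ _) (min_le_left _ _))))))))))))) ?_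
      have hs := EB.entropy_subadd p hp hp1 A' Y
      linarith [h, g, hs]
    · refine le_trans (le_trans (min_le_right _ _) (le_trans (min_le_right _ _) (le_trans (min_le_right _ _) (le_trans (min_le_right _ _) (le_trans (min_le_right _ _) (le_trans (min_le_right _ _) (le_trans (min_le_right _ _) (le_trans (min_le_right _ _) (le_trans (min_le_right _ _) (le_trans (min_le_right _ _) (le_trans (min_le_right _ _) (le_trans (min_le_right _ _) (le_trans (min_le_right _ _) (min_le_left _ _)))))))))))))) ?_
      have hs := EB.entropy_subadd p hp hp1 X' Y
      linarith [h, g, hs]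
    · refine le_trans (le_trans (min_le_right _ _) (le_trans (min_le_right _ _) (le_trans (min_le_right _ _) (le_trans (min_le_right _ _) (le_trans (min_le_right _ _) (le_trans (min_le_right _ _) (le_trans (min_le_right _ _) (le_trans (min_le_right _ _) (le_trans (min_le_right _ _) (le_trans (min_le_right _ _) (le_trans (min_le_right _ _) (le_trans (min_le_right _ _) (le_trans (min_le_right _ _) (min_le_right _ _)))))))))))))) ?_
      have hs := EB.entropy_subadd p hp hp1 Y' Y
      linarith [h, g, hs]
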